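/- Let $R$ be a unital ring with derivation $\partial$, and let $p, u \in R$ with $u(1-p) = 1 = (1-p)u$. Write $p_j := \partial^j p$. Then for every $n \ge 1$, $\partial^n u = \sum_{(a_1,\dots,a_k) \models n} \chi(a_1\cdots a_k)\; u\,p_{a_1}\,u\,p_{a_2}\,u \cdots u\,p_{a_k}\,u$, where the sum is over all compositions $(a_1,\dots,a_k)$ of $n$ and $\chi(a_1\cdots a_k) = \prod_{i=1}^{k}\binom{a_i+\cdots+a_k}{a_i}$ is the signature character. -/

import Mathlib

open Finset

/-- The set of compositions of `n` (lists of positive integers summing to `n`). -/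
def comps : ℕ → Finset (List ℕ+)
  | 0 => {[]}
  | n + 1 =>
    (Finset.range (n + 1)).attach.biUnion fun k =>
      (comps k.1).image fun l =>
        (⟨n + 1 - k.1, Nat.sub_pos_of_lt (Finset.mem_range.mp k.2)⟩ : ℕ+) :: l
  decreasing_by exact Finset.mem_range.mp k.2

/-- Signature character of a composition. -/
def chi : List ℕ+ → ℕ
  | [] => 1
  | a :: t => Nat.choose ((a : ℕ) + (t.map fun x => (x : ℕ)).sum) (a : ℕ) * chi t

section aux
variable {R : Type*} [Ring R] {D : R → R}

lemma D_zero (hadd : ∀ x y : R, D (x + y) = D x + D y) : D 0 = 0 := by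
  have h := hadd 0 0
  rw [add_zero] at h
  exact (left_eq_add.mp h)

lemma D_one (hmul : ∀ x y : R, D (x * y) = D x * y + x * D y) : D 1 = 0 := by
  have h := hmul 1 1
  simp at h
  exact h

def Dhom (hadd : ∀ x y : R, D (x + y) = D x + D y) : R →+ R :=
  { toFun := D, map_zero' := D_zero hadd, map_add' := hadd }

lemma D_sum (hadd : ∀ x y : R, D (x + y) = D x + D y) {ι : Type*} (s : Finset ι) (f : ι → R) :
    D (∑ i ∈ s, f i) = ∑ i ∈ s, D (f i) := map_sum (Dhom hadd) f s

lemma D_nsmul (hadd : ∀ x y : R, D (x + y) = D x + D y) (c : ℕ) (x : R) :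
    D (c • x) = c • D x := map_nsmul (Dhom hadd) c x

lemma D_leibniz (hadd : ∀ x y : R, D (x + y) = D x + D y)
    (hmul : ∀ x y : R, D (x * y) = D x * y + x * D y) (n : ℕ) (p q : R) :
    D^[n] (p * q) =
      ∑ k ∈ range n.succ, (n.choose k • (D^[n - k] p * D^[k] q)) := by
  induction n with
  | zero => simp [Finset.range]
  | succ n IH =>
    calc
      D^[n + 1] (p * q) =
          D (∑ k ∈ range n.succ,
              n.choose k • (D^[n - k] p * D^[k] q)) := by
        rw [Function.iterate_succ_apply', IH]
      _ = (∑ k ∈ range n.succ,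
            n.choose k • (D^[n - k + 1] p * D^[k] q)) +
          ∑ k ∈ range n.succ,
            n.choose k • (D^[n - k] p * D^[k + 1] q) := by
        simp_rw [D_sum hadd, D_nsmul hadd, hmul, Function.iterate_succ_apply',
          smul_add, sum_add_distrib]
      _ = (∑ k ∈ range n.succ,
                n.choose k.succ • (D^[n - k] p * D^[k + 1] q)) +
              1 • (D^[n + 1] p * D^[0] q) +
            ∑ k ∈ range n.succ, n.choose k • (D^[n - k] p * D^[k + 1] q) :=
        ?_
      _ = ((∑ k ∈ range n.succ, n.choose k • (D^[n - k] p * D^[k + 1] q)) +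
              ∑ k ∈ range n.succ,
                n.choose k.succ • (D^[n - k] p * D^[k + 1] q)) +
            1 • (D^[n + 1] p * D^[0] q) := by
        rw [add_comm, add_assoc]
      _ = (∑ i ∈ range n.succ,
              (n + 1).choose (i + 1) • (D^[n + 1 - (i + 1)] p * D^[i + 1] q)) +
            1 • (D^[n + 1] p * D^[0] q) := by
        simp_rw [Nat.choose_succ_succ, Nat.succ_sub_succ, add_smul, sum_add_distrib]
      _ = ∑ k ∈ range n.succ.succ,
            n.succ.choose k • (D^[n.succ - k] p * D^[k] q) := by
        rw [sum_range_succ' _ n.succ, Nat.choose_zero_right, tsub_zero]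
    congr
    refine (sum_range_succ' _ _).trans (congr_arg₂ (· + ·) ?_ ?_)
    · rw [sum_range_succ, Nat.choose_succ_self, zero_smul, add_zero]
      refine sum_congr rfl fun k hk => ?_
      rw [mem_range] at hk
      congr
      omega
    · rw [Nat.choose_zero_right, tsub_zero]

end aux

lemma comps_sum : ∀ n : ℕ, ∀ l ∈ comps n, (l.map fun (x : ℕ+) => (x : ℕ)).sum = n := by
  intro n
  induction n using Nat.strong_induction_on with
  | _ n ih =>
    match n with
    | 0 => intro l hl; simp [comps] at hl; simp [hl]
    | n + 1 =>
      intro l hl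
      rw [comps] at hl
      simp only [Finset.mem_biUnion, Finset.mem_attach, Finset.mem_image, true_and] at hl
      obtain ⟨k, l', hl', rfl⟩ := hl
      have hk : (k : ℕ) < n + 1 := mem_range.mp k.2
      erw [List.map_cons, List.sum_cons]
      rw [ih k.1 hk l' hl']
      show n + 1 - k.1 + k.1 = n + 1
      omega

lemma chi_cons (a : ℕ+) (t : List ℕ+) :
    chi (a :: t) = ((a:ℕ) + (t.map fun (x:ℕ+) => (x:ℕ)).sum).choose (a:ℕ) * chi t := by
  rw [chi]
  congr 2
  induction t with
  | nil => rfl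
  | cons b s ih => simp_all [List.flatMap_cons]

lemma flatMap_coe {β : Type*} (f : ℕ+ → β) (w : List ℕ+) :
    (w.flatMap fun a => [f a]) = w.map f := by
  induction w with
  | nil => rfl
  | cons a l ihl => simp [List.flatMap_cons, ihl]

lemma sum_comps_succ {M : Type*} [AddCommMonoid M] (n : ℕ) (F : List ℕ+ → M) :
    ∑ w ∈ comps (n + 1), F w =
      ∑ k ∈ (Finset.range (n + 1)).attach, ∑ l ∈ comps k.1,
        F ((⟨n + 1 - k.1, Nat.sub_pos_of_lt (Finset.mem_range.mp k.2)⟩ : ℕ+) :: l) := by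
  rw [comps, Finset.sum_biUnion]
  · refine Finset.sum_congr rfl fun k _ => ?_
    rw [Finset.sum_image]
    intro x _ y _ h
    exact (List.cons.injEq _ _ _ _ ▸ h).2
  · intro k _ k' _ hkk'
    simp only [Finset.disjoint_left, Finset.mem_image]
    rintro w ⟨l, _, rfl⟩ ⟨l', _, h⟩
    apply hkk'
    have h1 := (List.cons.injEq _ _ _ _ ▸ h).1
    have h2 : n + 1 - k'.1 = n + 1 - k.1 := congrArg (fun x : ℕ+ => (x : ℕ)) h1
    have hk : k.1 < n + 1 := Finset.mem_range.mp k.2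
    have hk' : k'.1 < n + 1 := Finset.mem_range.mp k'.2
    exact Subtype.ext (by omega)

lemma sig_aux {R : Type*} [Ring R] (D : R → R)
    (hadd : ∀ x y : R, D (x + y) = D x + D y)
    (hmul : ∀ x y : R, D (x * y) = D x * y + x * D y)
    (p u : R) (hu : u * (1 - p) = 1) (hu' : (1 - p) * u = 1) :
    ∀ n : ℕ, D^[n] u = ∑ w ∈ comps n,
        chi w • (u * (w.map (fun a : ℕ+ => D^[(a : ℕ)] p * u)).prod) := by
  intro n
  induction n using Nat.strong_induction_on with
  | _ n ih =>
  match n with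
  | 0 => simp [comps, chi]
  | n + 1 =>
    have hu1 : u = 1 + p * u := by
      have h := hu'
      rw [sub_mul, one_mul] at h
      exact eq_add_of_sub_eq h
    have key : (1 - p) * D^[n + 1] u =
        ∑ k ∈ range (n + 1), (n + 1).choose k • (D^[n + 1 - k] p * D^[k] u) := by
      have h2 := D_leibniz hadd hmul (n + 1) p u
      rw [Nat.succ_eq_add_one, sum_range_succ, Nat.choose_self, Nat.sub_self, one_smul,
        Function.iterate_zero_apply] at h2
      have h3 : D^[n + 1] u = D^[n + 1] (p * u) := by
        conv_lhs => rw [hu1]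
        rw [Function.iterate_succ_apply, Function.iterate_succ_apply, hadd, D_one hmul, zero_add]
      have h4 : D^[n + 1] u =
          (∑ k ∈ range (n + 1), (n + 1).choose k • (D^[n + 1 - k] p * D^[k] u))
            + p * D^[n + 1] u := h3.trans h2
      rw [sub_mul, one_mul]
      nth_rewrite 1 [h4]
      abel
    have key2 : D^[n + 1] u =
        u * ∑ k ∈ range (n + 1), (n + 1).choose k • (D^[n + 1 - k] p * D^[k] u) := by
      rw [← key, ← mul_assoc, hu, one_mul]
    rw [key2, sum_comps_succ, Finset.mul_sum, ← Finset.sum_attach (range (n + 1))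
      (fun k => u * ((n + 1).choose k • (D^[n + 1 - k] p * D^[k] u)))]
    refine Finset.sum_congr rfl fun k _ => ?_
    have hk : k.1 < n + 1 := Finset.mem_range.mp k.2
    rw [ih k.1 hk, mul_smul_comm, Finset.mul_sum, Finset.mul_sum, Finset.smul_sum]
    refine Finset.sum_congr rfl fun l hl => ?_
    have hsum := comps_sum k.1 l hl
    erw [chi_cons]
    erw [List.map_cons, List.prod_cons, PNat.mk_coe]
    rw [hsum, Nat.sub_add_cancel (le_of_lt hk), Nat.choose_symm (le_of_lt hk)]
    simp only [mul_smul_comm, smul_smul, mul_assoc]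

/-- Signature operator expansion: for a ring `R` with derivation `D`, `u` the
two-sided inverse of `1 - p`, and `p_j := Dʲ p`, we have for every `n ≥ 1` that
`Dⁿ u = ∑_{(a₁,…,a_k) ⊨ n} χ(a₁⋯a_k) u p_{a₁} u p_{a₂} u ⋯ u p_{a_k} u`, the sum
being over all compositions of `n`. -/
theorem signature_operator_expansion {R : Type*} [Ring R] (D : R → R)
    (hadd : ∀ x y : R, D (x + y) = D x + D y)
    (hmul : ∀ x y : R, D (x * y) = D x * y + x * D y)
    (p u : R) (hu : u * (1 - p) = 1) (hu' : (1 - p) * u = 1) :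
    ∀ n : ℕ, 1 ≤ n →
      D^[n] u = ∑ w ∈ comps n,
        chi w • (u * (w.map fun a => D^[(a : ℕ)] p * u).prod) := by
  intro n _
  simpa [flatMap_coe, List.map_map, Function.comp_def] using
    sig_aux D hadd hmul p u hu hu' n
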